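/- Let T be a tree with threshold assignment τ satisfying 1≤τ(u)≤d(u) for all u, and let v be a non-leaf node with τ(v) > (number of non-leaf neighbors of v). Then any timed target set S_0,…,S_k of (T,τ) satisfies Σ_{i=0}^{k} |S_i ∩ ({v}∪L(v))| ≥ 2, where L(v) is the set of leaf neighbors of v. -/

import Mathlib

open Finset
open scoped Classical

variable {V : Type*}

noncomputable def Qseq (G : SimpleGraph V) [Fintype V] (τ : V → ℕ) (S : ℕ → Finset V) :
    ℕ → Finset V
  | 0 => ∅
  | i + 1 => Finset.univ.filter fun v =>
      τ v ≤ (G.neighborFinset v ∩ (S i ∪ Qseq G τ S i)).card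

def IsTTS (G : SimpleGraph V) [Fintype V] (τ : V → ℕ) (S : ℕ → Finset V) (k : ℕ) : Prop :=
  S k = ∅ ∧ Qseq G τ S k = Finset.univ

def ttsSize (S : ℕ → Finset V) (k : ℕ) : ℕ := ∑ i ∈ Finset.range (k + 1), (S i).card

noncomputable def strictMaj (G : SimpleGraph V) [Fintype V] (v : V) : ℕ := (G.degree v + 2) / 2

noncomputable def npStep (G : SimpleGraph V) [Fintype V] (τ : V → ℕ) (A : Finset V) : Finset V :=
  Finset.univ.filter fun v => τ v ≤ (G.neighborFinset v ∩ A).card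

def IsTS (G : SimpleGraph V) [Fintype V] (τ : V → ℕ) (S : Finset V) : Prop :=
  ∃ i : ℕ, (npStep G τ)^[i] S = Finset.univ

noncomputable def MTT (G : SimpleGraph V) [Fintype V] (τ : V → ℕ) : ℕ :=
  sInf {m | ∃ (S : ℕ → Finset V) (k : ℕ), IsTTS G τ S k ∧ ttsSize S k = m}

/-- The set of leaf neighbors of `v` (neighbors of degree 1). -/
noncomputable def leafNbrs (T : SimpleGraph V) [Fintype V] (v : V) : Finset V :=
  (T.neighborFinset v).filter fun u => T.degree u = 1

/-- `l̄(v)`: the number of non-leaf neighbors of `v` (neighbors of degree `> 1`). -/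
noncomputable def lbar (T : SimpleGraph V) [Fintype V] (v : V) : ℕ :=
  ((T.neighborFinset v).filter fun u => 1 < T.degree u).card

/-- The class `A` of non-leaf nodes `v` with `τ(v) > l̄(v)`. -/
noncomputable def Aset (T : SimpleGraph V) [Fintype V] (τ : V → ℕ) : Finset V :=
  Finset.univ.filter fun v => 1 < T.degree v ∧ lbar T v < τ v

/-- The class `A''` of non-leaf nodes `v` with `τ(v) > l̄(v)` and `τ(v) = d(v)`. -/
noncomputable def Aset'' (T : SimpleGraph V) [Fintype V] (τ : V → ℕ) : Finset V :=
  Finset.univ.filter fun v => 1 < T.degree v ∧ lbar T v < τ v ∧ τ v = T.degree v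

/-- The class `C` of non-leaf nodes `v` with `τ(v) = l̄(v)`. -/
noncomputable def Cset (T : SimpleGraph V) [Fintype V] (τ : V → ℕ) : Finset V :=
  Finset.univ.filter fun v => 1 < T.degree v ∧ τ v = lbar T v

/-- Lemma 3: Let `T` be a tree with thresholds `1 ≤ τ(u) ≤ d(u)` and let
`v` be a non-leaf node with `τ(v) > l̄(v)` (i.e. `v ∈ A`). Then every timed target set
`S_0, …, S_k` satisfies `Σ_{i=0}^{k} |S_i ∩ ({v} ∪ L(v))| ≥ 2`. -/
theorem stmt12 [Fintype V] (T : SimpleGraph V) (hT : T.IsTree) (τ : V → ℕ)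
    (hτ : ∀ u, 1 ≤ τ u ∧ τ u ≤ T.degree u)
    (v : V) (hv : 1 < T.degree v) (hvA : lbar T v < τ v)
    (S : ℕ → Finset V) (k : ℕ) (hS : IsTTS T τ S k) :
    2 ≤ ∑ i ∈ Finset.range (k + 1), (S i ∩ insert v (leafNbrs T v)).card := by
  classical
  obtain ⟨hSk, hQk⟩ := hS
  set B := insert v (leafNbrs T v) with hB
  -- neighbors of v have positive degree
  have hdegpos : ∀ u, T.Adj v u → 0 < T.degree u := by
    intro u hadj
    rw [T.degree_pos_iff_exists_adj]
    exact ⟨v, hadj.symm⟩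
  -- a leaf neighbor of v has neighborFinset = {v}
  have hleafonly : ∀ u ∈ leafNbrs T v, T.neighborFinset u = {v} := by
    intro u hu
    simp only [leafNbrs, Finset.mem_filter, SimpleGraph.mem_neighborFinset] at hu
    obtain ⟨hadj, hdeg⟩ := hu
    have hvmem : v ∈ T.neighborFinset u := by
      rw [SimpleGraph.mem_neighborFinset]; exact hadj.symm
    have hcard : (T.neighborFinset u).card = 1 := by
      rw [T.card_neighborFinset_eq_degree]; exact hdeg
    obtain ⟨a, ha⟩ := Finset.card_eq_one.mp hcard
    rw [ha] at hvmem ⊢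
    simp only [Finset.mem_singleton] at hvmem
    rw [hvmem]
  -- if a leaf neighbor is activated at t+1, then v was in S t ∪ Q t
  have hleafstep : ∀ t, ∀ u ∈ leafNbrs T v, u ∈ Qseq T τ S (t + 1) →
      v ∈ S t ∪ Qseq T τ S t := by
    intro t u hu hq
    simp only [Qseq, Finset.mem_filter, Finset.mem_univ, true_and] at hq
    have h1 : 1 ≤ (T.neighborFinset u ∩ (S t ∪ Qseq T τ S t)).card :=
      le_trans (hτ u).1 hq
    obtain ⟨w, hw⟩ := Finset.card_pos.mp h1
    rw [hleafonly u hu] at hw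
    simp only [Finset.mem_inter, Finset.mem_singleton] at hw
    rw [← hw.1]; exact hw.2
  -- if v is activated at t+1, some leaf neighbor was in S t ∪ Q t
  have hvstep : ∀ t, v ∈ Qseq T τ S (t + 1) →
      ∃ u ∈ leafNbrs T v, u ∈ S t ∪ Qseq T τ S t := by
    intro t hq
    simp only [Qseq, Finset.mem_filter, Finset.mem_univ, true_and] at hq
    by_contra h
    push_neg at h
    have hsub : T.neighborFinset v ∩ (S t ∪ Qseq T τ S t) ⊆
        (T.neighborFinset v).filter fun u => 1 < T.degree u := by
      intro w hw
      simp only [Finset.mem_inter] at hw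
      simp only [Finset.mem_filter]
      refine ⟨hw.1, ?_⟩
      by_contra hd
      push_neg at hd
      have hadj : T.Adj v w := (SimpleGraph.mem_neighborFinset T v w).mp hw.1
      have hd1 : T.degree w = 1 := le_antisymm hd (hdegpos w hadj)
      have hwl : w ∈ leafNbrs T v := by
        simp only [leafNbrs, Finset.mem_filter]
        exact ⟨hw.1, hd1⟩
      exact h w hwl hw.2
    have := Finset.card_le_card hsub
    have hlb : (T.neighborFinset v ∩ (S t ∪ Qseq T τ S t)).card ≤ lbar T v := this
    omega
  -- membership in B
  have hvB : v ∈ B := Finset.mem_insert_self _ _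
  have hleafB : ∀ u ∈ leafNbrs T v, u ∈ B := fun u hu => Finset.mem_insert_of_mem hu
  -- single term bound
  have hterm : ∀ t w, w ∈ B → w ∈ S t → ∀ m, t < m →
      1 ≤ ∑ i ∈ Finset.range m, (S i ∩ B).card := by
    intro t w hwB hwS m htm
    calc 1 ≤ (S t ∩ B).card :=
          Finset.card_pos.mpr ⟨w, Finset.mem_inter.mpr ⟨hwS, hwB⟩⟩
      _ ≤ ∑ i ∈ Finset.range m, (S i ∩ B).card :=
          Finset.single_le_sum (f := fun i => (S i ∩ B).card)
            (fun i _ => Nat.zero_le _) (Finset.mem_range.mpr htm)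
  have hmono : ∀ m n : ℕ, m ≤ n →
      ∑ i ∈ Finset.range m, (S i ∩ B).card ≤ ∑ i ∈ Finset.range n, (S i ∩ B).card :=
    fun m n h => Finset.sum_le_sum_of_subset (Finset.range_subset_range.mpr h)
  -- key lemma 1
  have key1 : ∀ t, (v ∈ Qseq T τ S t ∨ ∃ u ∈ leafNbrs T v, u ∈ Qseq T τ S t) →
      1 ≤ ∑ i ∈ Finset.range t, (S i ∩ B).card := by
    intro t
    induction t using Nat.strong_induction_on with
    | _ t ih =>
      match t with
      | 0 =>
        intro h
        simp only [Qseq, Finset.notMem_empty] at h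
        rcases h with h | ⟨u, _, h⟩ <;> exact absurd h (by simp [Qseq])
      | (t + 1) =>
        intro h
        have step : (v ∈ S t ∪ Qseq T τ S t) ∨
            ∃ u ∈ leafNbrs T v, u ∈ S t ∪ Qseq T τ S t := by
          rcases h with h | ⟨u, hu, hq⟩
          · exact Or.inr (hvstep t h)
          · exact Or.inl (hleafstep t u hu hq)
        rcases step with hvm | ⟨u, hu, hum⟩
        · rcases Finset.mem_union.mp hvm with hs | hq
          · exact hterm t v hvB hs (t + 1) (Nat.lt_succ_self t)
          · exact le_trans (ih t (Nat.lt_succ_self t) (Or.inl hq))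
              (hmono t (t + 1) (Nat.le_succ t))
        · rcases Finset.mem_union.mp hum with hs | hq
          · exact hterm t u (hleafB u hu) hs (t + 1) (Nat.lt_succ_self t)
          · exact le_trans (ih t (Nat.lt_succ_self t) (Or.inr ⟨u, hu, hq⟩))
              (hmono t (t + 1) (Nat.le_succ t))
  -- key lemma 2
  have key2 : ∀ t, v ∈ Qseq T τ S t → (∃ u ∈ leafNbrs T v, u ∈ Qseq T τ S t) →
      2 ≤ ∑ i ∈ Finset.range t, (S i ∩ B).card := by
    intro t
    induction t using Nat.strong_induction_on with
    | _ t ih =>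
      match t with
      | 0 =>
        intro hvq _
        exact absurd hvq (by simp [Qseq])
      | (t + 1) =>
        intro hvq ⟨u, hu, huq⟩
        obtain ⟨u', hu', hu'm⟩ := hvstep t hvq
        have hvm := hleafstep t u hu huq
        have hsplit : ∑ i ∈ Finset.range (t + 1), (S i ∩ B).card =
            (∑ i ∈ Finset.range t, (S i ∩ B).card) + (S t ∩ B).card := by
          rw [Finset.sum_range_succ]
        rcases Finset.mem_union.mp hvm with hvs | hvq'
        · rcases Finset.mem_union.mp hu'm with hus | huq'
          · -- both v and u' in S t
            have hvne : v ≠ u' := by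
              intro he
              have : T.Adj v u' := by
                have := hu'
                simp only [leafNbrs, Finset.mem_filter,
                  SimpleGraph.mem_neighborFinset] at this
                exact this.1
              rw [he] at this
              exact T.loopless.irrefl u' this
            have h2 : 2 ≤ (S t ∩ B).card := by
              have : ({v, u'} : Finset V) ⊆ S t ∩ B := by
                intro w hw
                simp only [Finset.mem_insert, Finset.mem_singleton] at hw
                rcases hw with h | h <;> rw [h]
                · exact Finset.mem_inter.mpr ⟨hvs, hvB⟩
                · exact Finset.mem_inter.mpr ⟨hus, hleafB u' hu'⟩
              calc 2 = ({v, u'} : Finset V).card := by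
                    rw [Finset.card_insert_of_notMem (by simpa using hvne),
                      Finset.card_singleton]
                _ ≤ (S t ∩ B).card := Finset.card_le_card this
            omega
          · have h1 := key1 t (Or.inr ⟨u', hu', huq'⟩)
            have h2 : 1 ≤ (S t ∩ B).card :=
              Finset.card_pos.mpr ⟨v, Finset.mem_inter.mpr ⟨hvs, hvB⟩⟩
            omega
        · rcases Finset.mem_union.mp hu'm with hus | huq'
          · have h1 := key1 t (Or.inl hvq')
            have h2 : 1 ≤ (S t ∩ B).card :=
              Finset.card_pos.mpr ⟨u', Finset.mem_inter.mpr ⟨hus, hleafB u' hu'⟩⟩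
            omega
          · have := ih t (Nat.lt_succ_self t) hvq' ⟨u', hu', huq'⟩
            omega
  -- degree decomposition: there is a leaf neighbor of v
  have hcards : (leafNbrs T v).card + lbar T v = T.degree v := by
    rw [leafNbrs, lbar]
    have hfe : (T.neighborFinset v).filter (fun u => 1 < T.degree u) =
        (T.neighborFinset v).filter (fun u => ¬ T.degree u = 1) := by
      apply Finset.filter_congr
      intro u hu
      have := hdegpos u ((SimpleGraph.mem_neighborFinset T v u).mp hu)
      constructor
      · intro h; omega
      · intro h; omega
    rw [hfe, Finset.card_filter_add_card_filter_not,
      T.card_neighborFinset_eq_degree]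
  have hτv := (hτ v).2
  have hleafex : ∃ u, u ∈ leafNbrs T v := by
    have : 0 < (leafNbrs T v).card := by omega
    obtain ⟨u, hu⟩ := Finset.card_pos.mp this
    exact ⟨u, hu⟩
  obtain ⟨u, hu⟩ := hleafex
  have hvQ : v ∈ Qseq T τ S k := by rw [hQk]; exact Finset.mem_univ v
  have huQ : u ∈ Qseq T τ S k := by rw [hQk]; exact Finset.mem_univ u
  have h2 := key2 k hvQ ⟨u, hu, huQ⟩
  exact le_trans h2 (hmono k (k + 1) (Nat.le_succ k))
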